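/- arXiv:1311.5602 — 3 statements merged into one kernel-verified Lean document; each statement's English description precedes it below -/
import Mathlib

section
/- Let (h,φ) be an entropic functional pair. Then the function P ↦ H^min_{(h,φ)}(P) = h( ⌊1/P⌋ φ(P) + φ(1 − ⌊1/P⌋ P) ) is continuous and nonincreasing on the interval (0, 1]. Consequently, the function θ ↦ D_{(h,φ)}(θ) = H^min_{(h,φ)}(cos²θ) is nondecreasing on [0, π/2). -/
open scoped BigOperators

noncomputable section

/-- An entropic functional pair `(h, φ)` in the sense of Salicrú. -/
structure EntropicPair where
  phi : ℝ → ℝ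
  h : ℝ → ℝ
  phi_cont : ContinuousOn phi (Set.Icc 0 1)
  h_cont : Continuous h
  phi_zero : phi 0 = 0
  norm_zero : h (phi 1) = 0
  admissible : (StrictConcaveOn ℝ (Set.Icc (0:ℝ) 1) phi ∧ StrictMono h) ∨
               (StrictConvexOn ℝ (Set.Icc (0:ℝ) 1) phi ∧ StrictAnti h)

/-- `p` is a probability vector. -/
def IsProbVec {ι : Type*} [Fintype ι] (p : ι → ℝ) : Prop :=
  (∀ k, 0 ≤ p k) ∧ ∑ k, p k = 1

/-- The Salicrú `(h,φ)`-entropy of a probability vector. -/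
noncomputable def EntropicPair.H (e : EntropicPair) {ι : Type*} [Fintype ι] (p : ι → ℝ) : ℝ :=
  e.h (∑ k, e.phi (p k))

/-- `H^min_{(h,φ)}(P) = h(⌊1/P⌋ φ(P) + φ(1 − ⌊1/P⌋P))`. -/
noncomputable def EntropicPair.Hmin (e : EntropicPair) (P : ℝ) : ℝ :=
  e.h ((⌊1 / P⌋₊ : ℝ) * e.phi P + e.phi (1 - (⌊1 / P⌋₊ : ℝ) * P))

/-- `D_{(h,φ)}(θ) = H^min_{(h,φ)}(cos²θ)`. -/
noncomputable def EntropicPair.D (e : EntropicPair) (θ : ℝ) : ℝ :=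
  e.Hmin (Real.cos θ ^ 2)

/-- The `N`-dimensional vector with first `⌊1/P⌋` components equal to `P`, the next component
(present when `⌊1/P⌋ < N`) equal to `1 − ⌊1/P⌋P`, and all remaining components zero. -/
noncomputable def wvec (N : ℕ) (P : ℝ) : Fin N → ℝ := fun k =>
  if (k : ℕ) < ⌊1 / P⌋₊ then P
  else if (k : ℕ) = ⌊1 / P⌋₊ then 1 - (⌊1 / P⌋₊ : ℝ) * P
  else 0

/-- `p ≺ q`: `p` is majorized by `q`. (The sums of the `m` largest components of a vector
`v` coincide with the maxima, over subsets `s` of cardinality `m`, of `∑_{k∈s} v k`; this is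
the standard subset-sum characterization of majorization.) -/
def Majorizes {N : ℕ} (p q : Fin N → ℝ) : Prop :=
  (∑ k, p k = ∑ k, q k) ∧
  ∀ s : Finset (Fin N), ∃ t : Finset (Fin N), t.card = s.card ∧ ∑ k ∈ s, p k ≤ ∑ k ∈ t, q k

namespace HminAux

noncomputable def gm (φ : ℝ → ℝ) (m : ℕ) (x : ℝ) : ℝ := (m : ℝ) * φ x + φ (1 - (m : ℝ) * x)

noncomputable def gg (φ : ℝ → ℝ) (P : ℝ) : ℝ := gm φ ⌊1 / P⌋₊ P

lemma floor_facts {P : ℝ} (hP : P ∈ Set.Ioc (0:ℝ) 1) :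
    1 ≤ ⌊1/P⌋₊ ∧ (⌊1/P⌋₊ : ℝ) * P ≤ 1 ∧ 1 < ((⌊1/P⌋₊ : ℝ) + 1) * P := by
  obtain ⟨h0, h1⟩ := hP
  have hinv : (1:ℝ) ≤ 1 / P := (le_div_iff₀ h0).2 (by linarith)
  refine ⟨Nat.le_floor (by exact_mod_cast hinv), ?_, ?_⟩
  · have h2 := Nat.floor_le (le_trans zero_le_one hinv)
    have : (⌊1/P⌋₊ : ℝ) * P ≤ (1/P) * P := by nlinarith
    calc (⌊1/P⌋₊ : ℝ) * P ≤ (1/P) * P := this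
    _ = 1 := by field_simp
  · have h2 : 1 / P < (⌊1/P⌋₊ : ℝ) + 1 := by exact_mod_cast Nat.lt_floor_add_one (1/P)
    calc (1:ℝ) = (1/P) * P := by field_simp
    _ < ((⌊1/P⌋₊ : ℝ) + 1) * P := by nlinarith

lemma floor_one_div_eq {P : ℝ} {m : ℕ} (hm : 1 ≤ m) (h1 : 1 < ((m:ℝ) + 1) * P)
    (h2 : (m:ℝ) * P ≤ 1) : ⌊1/P⌋₊ = m := by
  have hm' : (1:ℝ) ≤ (m:ℝ) := by exact_mod_cast hm
  have hP : 0 < P := by nlinarith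
  rw [Nat.floor_eq_iff (by positivity)]
  constructor
  · rw [le_div_iff₀ hP]; exact h2
  · rw [div_lt_iff₀ hP]; exact h1

lemma slope4 {s : Set ℝ} {f : ℝ → ℝ} (hf : ConcaveOn ℝ s f) {a b x y : ℝ}
    (ha : a ∈ s) (hb : b ∈ s) (hx : x ∈ s) (hy : y ∈ s)
    (hab : a < b) (hbx : b ≤ x) (hxy : x < y) :
    (f y - f x) / (y - x) ≤ (f b - f a) / (b - a) := by
  rcases eq_or_lt_of_le hbx with rfl | hbx'
  · exact hf.slope_anti_adjacent ha hy hab hxy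
  · calc (f y - f x) / (y - x) ≤ (f x - f b) / (x - b) :=
        hf.slope_anti_adjacent hb hy hbx' hxy
    _ ≤ (f b - f a) / (b - a) := hf.slope_anti_adjacent ha hx hab hbx'

lemma gm_anti {φ : ℝ → ℝ} (hφ : ConcaveOn ℝ (Set.Icc 0 1) φ) {m : ℕ} (hm : 1 ≤ m) :
    AntitoneOn (gm φ m) (Set.Icc (1/((m:ℝ)+1)) (1/(m:ℝ))) := by
  have hm' : (1:ℝ) ≤ (m:ℝ) := by exact_mod_cast hm
  intro x hx y hy hxy
  rcases eq_or_lt_of_le hxy with rfl | hlt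
  · exact le_refl _
  obtain ⟨hx1, hx2⟩ := hx
  obtain ⟨hy1, hy2⟩ := hy
  have hmpos : (0:ℝ) < m := by linarith
  have hx0 : 0 < x := lt_of_lt_of_le (by positivity) hx1
  have hy0 : 0 < y := lt_trans hx0 hlt
  have hmy : (m:ℝ) * y ≤ 1 := by
    rw [le_div_iff₀ hmpos] at hy2; linarith
  have hx1' : 1 ≤ ((m:ℝ)+1) * x := by
    rw [div_le_iff₀ (by linarith : (0:ℝ) < (m:ℝ)+1)] at hx1; linarith
  set a := 1 - (m:ℝ) * y with ha_def
  set b := 1 - (m:ℝ) * x with hb_def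
  have hab : a < b := by
    simp only [ha_def, hb_def]; nlinarith
  have hbx : b ≤ x := by simp only [hb_def]; nlinarith
  have hyle1 : y ≤ 1 := le_trans hy2 (by
    rw [div_le_one hmpos]; exact hm')
  have hams : a ∈ Set.Icc (0:ℝ) 1 := ⟨by simp only [ha_def]; linarith,
    by simp only [ha_def]; nlinarith⟩
  have hbms : b ∈ Set.Icc (0:ℝ) 1 := ⟨by simp only [hb_def]; nlinarith,
    by simp only [hb_def]; nlinarith⟩
  have hxms : x ∈ Set.Icc (0:ℝ) 1 := ⟨le_of_lt hx0, by linarith⟩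
  have hyms : y ∈ Set.Icc (0:ℝ) 1 := ⟨le_of_lt hy0, hyle1⟩
  have key := slope4 hφ hams hbms hxms hyms hab hbx hlt
  have hba : b - a = (m:ℝ) * (y - x) := by simp only [ha_def, hb_def]; ring
  have h3 : (φ y - φ x) * (b - a) ≤ (φ b - φ a) * (y - x) :=
    (div_le_div_iff₀ (by linarith) (by linarith)).1 key
  rw [hba] at h3
  have hyx : 0 < y - x := by linarith
  have h4 : (φ y - φ x) * (m:ℝ) ≤ φ b - φ a :=
    le_of_mul_le_mul_right (by nlinarith) hyx
  simp only [gm, ← ha_def, ← hb_def]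
  nlinarith

lemma one_div_succ_le_one_div {m : ℝ} (hm : 0 < m) : 1/(m+1) ≤ 1/m :=
  one_div_le_one_div_of_le hm (by linarith)

lemma a_step {φ : ℝ → ℝ} (hφ : ConcaveOn ℝ (Set.Icc 0 1) φ) (hφ0 : φ 0 = 0)
    {m : ℕ} (hm : 1 ≤ m) :
    (m:ℝ) * φ (1/(m:ℝ)) ≤ ((m:ℝ)+1) * φ (1/((m:ℝ)+1)) := by
  have hm' : (1:ℝ) ≤ (m:ℝ) := by exact_mod_cast hm
  have hmpos : (0:ℝ) < m := by linarith
  have hle : 1/((m:ℝ)+1) ≤ 1/(m:ℝ) := one_div_succ_le_one_div hmpos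
  have h := gm_anti hφ hm (Set.left_mem_Icc.2 hle) (Set.right_mem_Icc.2 hle) hle
  simp only [gm] at h
  have e1 : 1 - (m:ℝ) * (1/(m:ℝ)) = 0 := by field_simp; ring
  have e2 : 1 - (m:ℝ) * (1/((m:ℝ)+1)) = 1/((m:ℝ)+1) := by field_simp; ring
  rw [e1, e2, hφ0] at h
  linarith

lemma a_mono {φ : ℝ → ℝ} (hφ : ConcaveOn ℝ (Set.Icc 0 1) φ) (hφ0 : φ 0 = 0)
    {m n : ℕ} (hm : 1 ≤ m) (hmn : m ≤ n) :
    (m:ℝ) * φ (1/(m:ℝ)) ≤ (n:ℝ) * φ (1/(n:ℝ)) := by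
  induction n, hmn using Nat.le_induction with
  | base => exact le_refl _
  | succ n hn ih =>
      refine le_trans ih ?_
      have h := a_step hφ hφ0 (le_trans hm hn)
      push_cast
      linarith

lemma gg_anti {φ : ℝ → ℝ} (hφ : ConcaveOn ℝ (Set.Icc 0 1) φ) (hφ0 : φ 0 = 0) :
    AntitoneOn (gg φ) (Set.Ioc 0 1) := by
  intro P hP Q hQ hPQ
  obtain ⟨hn1, hn2, hn3⟩ := floor_facts hP
  obtain ⟨hk1, hk2, hk3⟩ := floor_facts hQ
  set n := ⌊1/P⌋₊ with hn_def
  set k := ⌊1/Q⌋₊ with hk_def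
  have hP0 : 0 < P := hP.1
  have hQ0 : 0 < Q := hQ.1
  have hn' : (1:ℝ) ≤ (n:ℝ) := by exact_mod_cast hn1
  have hk' : (1:ℝ) ≤ (k:ℝ) := by exact_mod_cast hk1
  have hkn : k ≤ n := Nat.floor_mono (one_div_le_one_div_of_le hP0 hPQ)
  have hPmem : P ∈ Set.Icc (1/((n:ℝ)+1)) (1/(n:ℝ)) := by
    constructor
    · rw [div_le_iff₀ (by linarith : (0:ℝ) < (n:ℝ)+1)]; linarith
    · rw [le_div_iff₀ (by linarith : (0:ℝ) < (n:ℝ))]; linarith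
  have hQmem : Q ∈ Set.Icc (1/((k:ℝ)+1)) (1/(k:ℝ)) := by
    constructor
    · rw [div_le_iff₀ (by linarith : (0:ℝ) < (k:ℝ)+1)]; linarith
    · rw [le_div_iff₀ (by linarith : (0:ℝ) < (k:ℝ))]; linarith
  show gm φ k Q ≤ gm φ n P
  rcases eq_or_lt_of_le hkn with heq | hlt
  · rw [heq] at hQmem ⊢
    exact gm_anti hφ hn1 hPmem hQmem hPQ
  · have c1 : gm φ n (1/(n:ℝ)) ≤ gm φ n P := by
      apply gm_anti hφ hn1 hPmem (Set.right_mem_Icc.2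
        (one_div_succ_le_one_div (by linarith))) hPmem.2
    have c2 : gm φ n (1/(n:ℝ)) = (n:ℝ) * φ (1/(n:ℝ)) := by
      simp only [gm]
      have e1 : 1 - (n:ℝ) * (1/(n:ℝ)) = 0 := by field_simp; ring
      rw [e1, hφ0]; ring
    have c4 : gm φ k (1/((k:ℝ)+1)) = ((k:ℝ)+1) * φ (1/((k:ℝ)+1)) := by
      simp only [gm]
      have e2 : 1 - (k:ℝ) * (1/((k:ℝ)+1)) = 1/((k:ℝ)+1) := by field_simp; ring
      rw [e2]; ring
    have c3 : ((k:ℝ)+1) * φ (1/((k:ℝ)+1)) ≤ (n:ℝ) * φ (1/(n:ℝ)) := by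
      have h := a_mono hφ hφ0 (m := k+1) (n := n) (by omega) (by omega)
      push_cast at h
      exact h
    have c5 : gm φ k Q ≤ gm φ k (1/((k:ℝ)+1)) := by
      apply gm_anti hφ hk1 (Set.left_mem_Icc.2
        (one_div_succ_le_one_div (by linarith))) hQmem hQmem.1
    linarith

lemma gm_contOn {φ : ℝ → ℝ} (hφc : ContinuousOn φ (Set.Icc 0 1)) {m : ℕ} (hm : 1 ≤ m) :
    ContinuousOn (gm φ m) (Set.Icc 0 (1/(m:ℝ))) := by
  have hm' : (1:ℝ) ≤ (m:ℝ) := by exact_mod_cast hm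
  have hsub : Set.Icc (0:ℝ) (1/(m:ℝ)) ⊆ Set.Icc 0 1 := by
    apply Set.Icc_subset_Icc_right
    rw [div_le_one (by linarith)]; exact hm'
  apply ContinuousOn.add
  · exact continuousOn_const.mul (hφc.mono hsub)
  · apply hφc.comp
    · exact (continuous_const.sub (continuous_const.mul continuous_id)).continuousOn
    · intro x hx
      obtain ⟨hx1, hx2⟩ := hx
      rw [le_div_iff₀ (by linarith : (0:ℝ) < (m:ℝ))] at hx2
      have h0 : (0:ℝ) ≤ (m:ℝ) * x := mul_nonneg (by linarith) hx1
      simp only [Set.mem_Icc]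
      constructor <;> nlinarith

lemma gg_cont {φ : ℝ → ℝ} (hφc : ContinuousOn φ (Set.Icc 0 1)) (hφ0 : φ 0 = 0) :
    ContinuousOn (gg φ) (Set.Ioc 0 1) := by
  intro P0 hP0
  obtain ⟨hn1, hn2, hn3⟩ := floor_facts hP0
  set n := ⌊1/P0⌋₊ with hn_def
  have hP00 : 0 < P0 := hP0.1
  have hn' : (1:ℝ) ≤ (n:ℝ) := by exact_mod_cast hn1
  have hPle : P0 ≤ 1/(n:ℝ) := by
    rw [le_div_iff₀ (by linarith : (0:ℝ) < (n:ℝ))]; linarith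
  have hPgt : 1/((n:ℝ)+1) < P0 := by
    rw [div_lt_iff₀ (by linarith : (0:ℝ) < (n:ℝ)+1)]; linarith
  have hsplit : Set.Ioc (0:ℝ) 1 ⊆
      (Set.Ioc (0:ℝ) 1 ∩ Set.Iic P0) ∪ (Set.Ioc (0:ℝ) 1 ∩ Set.Ici P0) := by
    intro x hx
    rcases le_total x P0 with h | h
    · exact Or.inl ⟨hx, h⟩
    · exact Or.inr ⟨hx, h⟩
  have left : ContinuousWithinAt (gg φ) (Set.Ioc 0 1 ∩ Set.Iic P0) P0 := by
    have hc : ContinuousWithinAt (gm φ n) (Set.Ioc 0 1 ∩ Set.Iic P0) P0 := by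
      apply ((gm_contOn hφc hn1) P0 ⟨le_of_lt hP00, hPle⟩).mono
      intro x hx
      exact ⟨le_of_lt hx.1.1, le_trans hx.2 hPle⟩
    apply hc.congr_of_eventuallyEq _ (by unfold gg; rw [← hn_def])
    have hev : Set.Ioi (1/((n:ℝ)+1)) ∈ nhdsWithin P0 (Set.Ioc 0 1 ∩ Set.Iic P0) :=
      mem_nhdsWithin_of_mem_nhds (Ioi_mem_nhds hPgt)
    filter_upwards [hev, self_mem_nhdsWithin] with x hx1 hx2
    have hx1' : 1/((n:ℝ)+1) < x := hx1
    show gm φ ⌊1/x⌋₊ x = gm φ n x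
    have hA : 1 < ((n:ℝ)+1) * x := by
      rw [div_lt_iff₀ (by linarith : (0:ℝ) < (n:ℝ)+1)] at hx1'; linarith
    have hB : (n:ℝ) * x ≤ 1 := by
      have hxle : x ≤ 1/(n:ℝ) := le_trans hx2.2 hPle
      rw [le_div_iff₀ (by linarith : (0:ℝ) < (n:ℝ))] at hxle; linarith
    rw [floor_one_div_eq hn1 hA hB]
  have right : ContinuousWithinAt (gg φ) (Set.Ioc 0 1 ∩ Set.Ici P0) P0 := by
    by_cases hc1 : (n:ℝ) * P0 = 1
    · by_cases hone : n = 1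
      · have hP1 : P0 = 1 := by rw [hone] at hc1; push_cast at hc1; linarith
        apply continuousWithinAt_singleton.mono
        intro x hx
        have : x = P0 := le_antisymm (hP1 ▸ hx.1.2) hx.2
        simp [this]
      · have hn2le : 2 ≤ n := by omega
        have hn2' : (2:ℝ) ≤ (n:ℝ) := by exact_mod_cast hn2le
        have hnm1 : ((n-1 : ℕ) : ℝ) = (n:ℝ) - 1 := by
          have : 1 ≤ n := by omega
          push_cast [this]
          ring
        have hP0lt : P0 < 1/((n:ℝ)-1) := by
          rw [lt_div_iff₀ (by linarith : (0:ℝ) < (n:ℝ)-1)]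
          nlinarith
        have hvals : gm φ n P0 = gm φ (n-1) P0 := by
          simp only [gm, hnm1]
          have e1 : 1 - (n:ℝ) * P0 = 0 := by linarith
          have e2 : 1 - ((n:ℝ)-1) * P0 = P0 := by linarith
          rw [e1, e2, hφ0]
          ring
        have hcw : ContinuousWithinAt (gm φ (n-1)) (Set.Ioc 0 1 ∩ Set.Ici P0) P0 := by
          have hmem : P0 ∈ Set.Icc (0:ℝ) (1/((n-1:ℕ):ℝ)) := by
            rw [hnm1]; exact ⟨le_of_lt hP00, le_of_lt hP0lt⟩
          apply ((gm_contOn hφc (by omega : 1 ≤ n-1)) P0 hmem).mono_of_mem_nhdsWithin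
          have h1 : Set.Iio (1/((n:ℝ)-1)) ∈ nhdsWithin P0 (Set.Ioc 0 1 ∩ Set.Ici P0) :=
            mem_nhdsWithin_of_mem_nhds (Iio_mem_nhds hP0lt)
          filter_upwards [h1, self_mem_nhdsWithin] with x hx1 hx2
          have hx1' : x < 1/((n:ℝ)-1) := hx1
          rw [hnm1]
          exact ⟨le_of_lt hx2.1.1, le_of_lt hx1'⟩
        refine hcw.congr_of_eventuallyEq ?_ (by unfold gg; rw [← hn_def]; exact hvals)
        have h1 : Set.Iio (1/((n:ℝ)-1)) ∈ nhdsWithin P0 (Set.Ioc 0 1 ∩ Set.Ici P0) :=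
          mem_nhdsWithin_of_mem_nhds (Iio_mem_nhds hP0lt)
        filter_upwards [h1, self_mem_nhdsWithin] with x hx1 hx2
        have hx1' : x < 1/((n:ℝ)-1) := hx1
        show gm φ ⌊1/x⌋₊ x = gm φ (n-1) x
        rcases eq_or_lt_of_le (show P0 ≤ x from hx2.2) with heq | hgt
        · rw [← heq, ← hn_def, hvals]
        · have hA : 1 < (((n-1:ℕ):ℝ)+1) * x := by
            rw [hnm1]
            have : 1/(n:ℝ) < x := by
              rw [div_lt_iff₀ (by linarith : (0:ℝ) < (n:ℝ))]
              nlinarith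
            rw [div_lt_iff₀ (by linarith : (0:ℝ) < (n:ℝ))] at this
            have : ((n:ℝ)-1+1) * x = (n:ℝ) * x := by ring
            rw [this]
            linarith
          have hB : ((n-1:ℕ):ℝ) * x ≤ 1 := by
            rw [hnm1]
            rw [lt_div_iff₀ (by linarith : (0:ℝ) < (n:ℝ)-1)] at hx1'
            linarith
          rw [floor_one_div_eq (by omega : 1 ≤ n-1) hA hB]
    · have hltn : P0 < 1/(n:ℝ) := by
        rcases eq_or_lt_of_le hPle with heq | h
        · exfalso; apply hc1
          rw [heq]; field_simp
        · exact h
      have hcw : ContinuousWithinAt (gm φ n) (Set.Ioc 0 1 ∩ Set.Ici P0) P0 := by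
        apply ((gm_contOn hφc hn1) P0 ⟨le_of_lt hP00, hPle⟩).mono_of_mem_nhdsWithin
        have h1 : Set.Iio (1/(n:ℝ)) ∈ nhdsWithin P0 (Set.Ioc 0 1 ∩ Set.Ici P0) :=
          mem_nhdsWithin_of_mem_nhds (Iio_mem_nhds hltn)
        filter_upwards [h1, self_mem_nhdsWithin] with x hx1 hx2
        have hx1' : x < 1/(n:ℝ) := hx1
        exact ⟨le_of_lt hx2.1.1, le_of_lt hx1'⟩
      refine hcw.congr_of_eventuallyEq ?_ (by unfold gg; rw [← hn_def])
      have h1 : Set.Iio (1/(n:ℝ)) ∈ nhdsWithin P0 (Set.Ioc 0 1 ∩ Set.Ici P0) :=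
        mem_nhdsWithin_of_mem_nhds (Iio_mem_nhds hltn)
      filter_upwards [h1, self_mem_nhdsWithin] with x hx1 hx2
      have hx1' : x < 1/(n:ℝ) := hx1
      show gm φ ⌊1/x⌋₊ x = gm φ n x
      have hA : 1 < ((n:ℝ)+1) * x := by
        have : 1/((n:ℝ)+1) < x := lt_of_lt_of_le hPgt hx2.2
        rw [div_lt_iff₀ (by linarith : (0:ℝ) < (n:ℝ)+1)] at this
        linarith
      have hB : (n:ℝ) * x ≤ 1 := by
        rw [lt_div_iff₀ (by linarith : (0:ℝ) < (n:ℝ))] at hx1'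
        linarith
      rw [floor_one_div_eq hn1 hA hB]
  exact (left.union right).mono hsplit

lemma gg_neg (φ : ℝ → ℝ) (P : ℝ) : gg (-φ) P = - gg φ P := by
  simp only [gg, gm, Pi.neg_apply]; ring

end HminAux

/-- `P ↦ H^min_{(h,φ)}(P)` is continuous and nonincreasing on `(0,1]`;
consequently `θ ↦ D_{(h,φ)}(θ)` is nondecreasing on `[0, π/2)`. -/
theorem hmin_continuous_antitone (e : EntropicPair) :
    ContinuousOn e.Hmin (Set.Ioc 0 1) ∧ AntitoneOn e.Hmin (Set.Ioc 0 1) ∧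
    MonotoneOn e.D (Set.Ico 0 (Real.pi / 2)) := by
  have hcont : ContinuousOn e.Hmin (Set.Ioc 0 1) := by
    have : e.Hmin = fun P => e.h (HminAux.gg e.phi P) := rfl
    rw [this]
    exact e.h_cont.comp_continuousOn (HminAux.gg_cont e.phi_cont e.phi_zero)
  have hanti : AntitoneOn e.Hmin (Set.Ioc 0 1) := by
    rcases e.admissible with ⟨hconc, hmono⟩ | ⟨hconv, hant⟩
    · intro a ha b hb hab
      exact hmono.monotone (HminAux.gg_anti hconc.concaveOn e.phi_zero ha hb hab)
    · intro a ha b hb hab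
      have hneg := HminAux.gg_anti hconv.neg.concaveOn
        (by simp [e.phi_zero] : (-e.phi) 0 = 0) ha hb hab
      rw [HminAux.gg_neg, HminAux.gg_neg] at hneg
      exact hant.antitone (by linarith : HminAux.gg e.phi a ≤ HminAux.gg e.phi b)
  refine ⟨hcont, hanti, ?_⟩
  intro θ hθ θ' hθ' hle
  have mem : ∀ ψ, ψ ∈ Set.Ico 0 (Real.pi/2) → Real.cos ψ ^ 2 ∈ Set.Ioc (0:ℝ) 1 := by
    intro ψ hψ
    have hc : 0 < Real.cos ψ :=
      Real.cos_pos_of_mem_Ioo ⟨by linarith [Real.pi_pos, hψ.1], hψ.2⟩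
    constructor
    · positivity
    · nlinarith [Real.cos_le_one ψ]
  have hsq : Real.cos θ' ^ 2 ≤ Real.cos θ ^ 2 := by
    have h1 : Real.cos θ' ≤ Real.cos θ :=
      Real.cos_le_cos_of_nonneg_of_le_pi hθ.1 (by linarith [Real.pi_pos, hθ'.2]) hle
    have h2 : 0 ≤ Real.cos θ' :=
      le_of_lt (Real.cos_pos_of_mem_Ioo ⟨by linarith [Real.pi_pos, hθ'.1], hθ'.2⟩)
    nlinarith
  exact hanti (mem θ' hθ') (mem θ hθ) hsq
end
end

section
/- Let (h_A,φ_A) and (h_B,φ_B) be entropic functional pairs and let c_A, c_B, c_{A,B} ∈ (0,1] with c_{A,B} ≤ c_A c_B; set γ_A = arccos c_A, γ_B = arccos c_B, γ_{A,B} = arccos c_{A,B}. Define the Landau–Pollak domain D_LP = { (P_A, P_B) ∈ (0, c_A²] × (0, c_B²] : arccos √P_A + arccos √P_B ≥ γ_{A,B} }. Then the infimum over (P_A, P_B) ∈ D_LP of H^min_{(h_A,φ_A)}(P_A) + H^min_{(h_B,φ_B)}(P_B) is attained and equals D_{(h_A,φ_A)}(γ_A) + D_{(h_B,φ_B)}(γ_B)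 when γ_{A,B} ≤ γ_A + γ_B, and equals min_{θ ∈ [γ_A, γ_{A,B} − γ_B]} ( D_{(h_A,φ_A)}(θ) + D_{(h_B,φ_B)}(γ_{A,B} − θ) ) otherwise. -/
open scoped BigOperators

noncomputable section

open Real Set

namespace LPaux

noncomputable def gaux (φ : ℝ → ℝ) (n : ℕ) (P : ℝ) : ℝ := (n : ℝ) * φ P + φ (1 - (n : ℝ) * P)

noncomputable def Gfun (φ : ℝ → ℝ) (P : ℝ) : ℝ :=
  (⌊1 / P⌋₊ : ℝ) * φ P + φ (1 - (⌊1 / P⌋₊ : ℝ) * P)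

lemma Gfun_eq (φ : ℝ → ℝ) (P : ℝ) : Gfun φ P = gaux φ ⌊1 / P⌋₊ P := rfl

lemma slope_lem {φ : ℝ → ℝ} (hφ : ConcaveOn ℝ (Icc 0 1) φ)
    {a b c d : ℝ} (ha : 0 ≤ a) (hab : a < b) (hbc : b ≤ c) (hcd : c < d) (hd : d ≤ 1) :
    (φ d - φ c) * (b - a) ≤ (φ b - φ a) * (d - c) := by
  have key : (φ d - φ c) / (d - c) ≤ (φ b - φ a) / (b - a) := by
    rcases eq_or_lt_of_le hbc with rfl | hbc'
    · exact hφ.slope_anti_adjacent ⟨ha, by linarith⟩ ⟨by linarith, hd⟩ hab hcd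
    · have h1 := hφ.slope_anti_adjacent (x := a) (y := b) (z := c)
        ⟨ha, by linarith⟩ ⟨by linarith, by linarith⟩ hab hbc'
      have h2 := hφ.slope_anti_adjacent (x := b) (y := c) (z := d)
        ⟨by linarith, by linarith⟩ ⟨by linarith, hd⟩ hbc' hcd
      linarith
  rw [div_le_div_iff₀ (by linarith) (by linarith)] at key
  linarith

lemma gaux_anti {φ : ℝ → ℝ} (hφ : ConcaveOn ℝ (Icc 0 1) φ)
    {n : ℕ} (hn : 1 ≤ n) {P Q : ℝ} (hP0 : 0 < P) (hPQ : P ≤ Q)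
    (hP : 1 ≤ ((n : ℝ) + 1) * P) (hQ : (n : ℝ) * Q ≤ 1) :
    gaux φ n Q ≤ gaux φ n P := by
  rcases eq_or_lt_of_le hPQ with rfl | h
  · exact le_refl _
  have hn' : (1 : ℝ) ≤ (n : ℝ) := by exact_mod_cast hn
  have key := slope_lem hφ (a := 1 - n * Q) (b := 1 - n * P) (c := P) (d := Q)
    (by nlinarith) (by nlinarith) (by nlinarith) h (by nlinarith)
  have hba : (1 - (n : ℝ) * P) - (1 - (n : ℝ) * Q) = (n : ℝ) * (Q - P) := by ring
  rw [hba] at key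
  have hQP : 0 < Q - P := by linarith
  have key2 : (n : ℝ) * (φ Q - φ P) ≤ φ (1 - (n : ℝ) * P) - φ (1 - (n : ℝ) * Q) := by
    have h' : ((n : ℝ) * (φ Q - φ P)) * (Q - P) ≤
        (φ (1 - (n : ℝ) * P) - φ (1 - (n : ℝ) * Q)) * (Q - P) := by
      calc ((n : ℝ) * (φ Q - φ P)) * (Q - P) = (φ Q - φ P) * ((n : ℝ) * (Q - P)) := by ring
        _ ≤ _ := key
    exact le_of_mul_le_mul_right h' hQP
  unfold gaux
  nlinarith [key2]

lemma floor_one_div_eq {x : ℝ} {n : ℕ} (hx : 0 < x)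
    (h1 : (n : ℝ) * x ≤ 1) (h2 : 1 < ((n : ℝ) + 1) * x) : ⌊1 / x⌋₊ = n := by
  rw [Nat.floor_eq_iff (by positivity)]
  constructor
  · rw [le_div_iff₀ hx]; linarith
  · rw [div_lt_iff₀ hx]; push_cast; linarith

lemma floor_facts {P : ℝ} (hP : P ∈ Ioc (0 : ℝ) 1) :
    1 ≤ ⌊1 / P⌋₊ ∧ (⌊1 / P⌋₊ : ℝ) * P ≤ 1 ∧ 1 < ((⌊1 / P⌋₊ : ℝ) + 1) * P := by
  obtain ⟨h0, h1⟩ := hP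
  have hinv : (1 : ℝ) ≤ 1 / P := by rw [le_div_iff₀ h0]; linarith
  refine ⟨Nat.le_floor (by exact_mod_cast hinv), ?_, ?_⟩
  · have := Nat.floor_le (by positivity : (0:ℝ) ≤ 1 / P)
    rw [le_div_iff₀ h0] at this; linarith
  · have := Nat.lt_floor_add_one (1 / P)
    rw [div_lt_iff₀ h0] at this; linarith

lemma Gfun_inv_nat {φ : ℝ → ℝ} (hφ0 : φ 0 = 0) {n : ℕ} (hn : 1 ≤ n) :
    Gfun φ (1 / (n : ℝ)) = (n : ℝ) * φ (1 / (n : ℝ)) := by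
  have hn0 : (n : ℝ) ≠ 0 := by positivity
  have hfl : ⌊1 / (1 / (n : ℝ))⌋₊ = n := by
    rw [one_div_one_div]; exact Nat.floor_natCast n
  rw [Gfun, hfl, mul_one_div_cancel hn0]
  simp [hφ0]

lemma gaux_succ_eq {φ : ℝ → ℝ} (hφ0 : φ 0 = 0) {k : ℕ} (hk : 1 ≤ k) :
    gaux φ k (1 / ((k : ℝ) + 1)) = Gfun φ (1 / ((k + 1 : ℕ) : ℝ)) := by
  have hk0 : (0 : ℝ) < (k : ℝ) + 1 := by positivity
  rw [Gfun_inv_nat hφ0 (by omega)]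
  push_cast
  have h1 : 1 - (k : ℝ) * (1 / ((k : ℝ) + 1)) = 1 / ((k : ℝ) + 1) := by
    field_simp; ring
  rw [gaux, h1]; ring

lemma gaux_self_eq {φ : ℝ → ℝ} (hφ0 : φ 0 = 0) {k : ℕ} (hk : 1 ≤ k) :
    gaux φ k (1 / (k : ℝ)) = Gfun φ (1 / (k : ℝ)) := by
  have hk0 : (k : ℝ) ≠ 0 := by positivity
  rw [Gfun_inv_nat hφ0 hk, gaux, mul_one_div_cancel hk0]
  simp [hφ0]

lemma Gfun_anti {φ : ℝ → ℝ} (hφ : ConcaveOn ℝ (Icc 0 1) φ) (hφ0 : φ 0 = 0) :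
    AntitoneOn (Gfun φ) (Ioc (0 : ℝ) 1) := by
  have step : ∀ k : ℕ, 1 ≤ k → Gfun φ (1 / (k : ℝ)) ≤ Gfun φ (1 / ((k + 1 : ℕ) : ℝ)) := by
    intro k hk
    have hk0 : (0 : ℝ) < (k : ℝ) := by exact_mod_cast hk
    rw [← gaux_succ_eq hφ0 hk, ← gaux_self_eq hφ0 hk]
    exact gaux_anti hφ hk (by positivity)
      (one_div_le_one_div_of_le hk0 (by linarith))
      (mul_one_div_cancel (by positivity : ((k : ℝ) + 1) ≠ 0)).ge
      (mul_one_div_cancel hk0.ne').le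
  have chain : ∀ n m : ℕ, 1 ≤ n → n ≤ m → Gfun φ (1 / (n : ℝ)) ≤ Gfun φ (1 / (m : ℝ)) := by
    intro n m hn hnm
    induction hnm with
    | refl => exact le_refl _
    | step hm ih => exact ih.trans (step _ (hn.trans hm))
  intro P hP Q hQ hPQ
  obtain ⟨hm1, hm2, hm3⟩ := floor_facts hP
  obtain ⟨hn1, hn2, hn3⟩ := floor_facts hQ
  set m := ⌊1 / P⌋₊
  set n := ⌊1 / Q⌋₊
  have hmn : n ≤ m := Nat.floor_mono (by
    apply one_div_le_one_div_of_le hP.1 hPQ)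
  rcases eq_or_lt_of_le hmn with heq | hlt
  · -- same piece
    rw [Gfun_eq φ P, Gfun_eq φ Q]
    show gaux φ n Q ≤ gaux φ m P
    rw [heq]
    exact gaux_anti hφ hm1 hP.1 hPQ (le_of_lt hm3) (heq ▸ hn2)
  · -- m ≥ n + 1
    have hm0 : (0 : ℝ) < (m : ℝ) := by exact_mod_cast hm1
    have hn0 : (0 : ℝ) < (n : ℝ) := by exact_mod_cast hn1
    have h1 : Gfun φ (1 / (m : ℝ)) ≤ Gfun φ P := by
      rw [← gaux_self_eq hφ0 hm1, Gfun_eq φ P]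
      exact gaux_anti hφ hm1 hP.1
        (by rw [le_div_iff₀ hm0]; linarith)
        (le_of_lt hm3)
        (mul_one_div_cancel hm0.ne').le
    have h2 : Gfun φ (1 / ((n + 1 : ℕ) : ℝ)) ≤ Gfun φ (1 / (m : ℝ)) :=
      chain (n + 1) m (by omega) hlt
    have h3 : Gfun φ Q ≤ Gfun φ (1 / ((n + 1 : ℕ) : ℝ)) := by
      rw [← gaux_succ_eq hφ0 hn1, Gfun_eq φ Q]
      push_cast
      exact gaux_anti hφ hn1 (by positivity)
        (by rw [div_le_iff₀ (by positivity)]; nlinarith)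
        (mul_one_div_cancel (by positivity : ((n : ℝ) + 1) ≠ 0)).ge
        hn2
    linarith

lemma gaux_contOn {φ : ℝ → ℝ} (hc : ContinuousOn φ (Icc 0 1)) {n : ℕ} (hn : 1 ≤ n) :
    ContinuousOn (gaux φ n) (Icc 0 (1 / (n : ℝ))) := by
  have hn0 : (0 : ℝ) < (n : ℝ) := by exact_mod_cast hn
  have hn1 : (1 : ℝ) / n ≤ 1 := by rw [div_le_one hn0]; exact_mod_cast hn
  apply ContinuousOn.add
  · exact continuousOn_const.mul (hc.mono (Icc_subset_Icc le_rfl hn1))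
  · apply hc.comp (continuousOn_const.sub (continuousOn_const.mul continuousOn_id))
    intro x hx
    obtain ⟨hx0, hx1⟩ := hx
    have : (n : ℝ) * x ≤ 1 := by
      rw [le_div_iff₀ hn0] at hx1; linarith
    exact ⟨by simp; linarith, by simp; positivity⟩

lemma Gfun_contOn {φ : ℝ → ℝ} (hc : ContinuousOn φ (Icc 0 1)) (hφ0 : φ 0 = 0) :
    ContinuousOn (Gfun φ) (Ioc (0 : ℝ) 1) := by
  intro P0 hP0
  obtain ⟨hn1, hf1, hf2⟩ := floor_facts hP0
  set n := ⌊1 / P0⌋₊ with hn_def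
  have hn0 : (0 : ℝ) < (n : ℝ) := by exact_mod_cast hn1
  have hP0pos : 0 < P0 := hP0.1
  have hP0le : P0 ≤ 1 / (n : ℝ) := by rw [le_div_iff₀ hn0]; linarith
  have hP0gt : 1 / ((n : ℝ) + 1) < P0 := by rw [div_lt_iff₀ (by positivity)]; linarith
  -- left piece
  have hL : ContinuousWithinAt (Gfun φ) (Ioc 0 1 ∩ Iic P0) P0 := by
    rw [← continuousWithinAt_inter (isOpen_Ioi.mem_nhds hP0gt : Ioi (1 / ((n : ℝ) + 1)) ∈ nhds P0)]
    apply ContinuousWithinAt.congr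
      (((gaux_contOn hc hn1) P0 ⟨hP0pos.le, hP0le⟩).mono ?_) ?_ (Gfun_eq φ P0)
    · rintro x ⟨⟨⟨hx0, _⟩, hx2⟩, _⟩
      exact ⟨hx0.le, hx2.trans hP0le⟩
    · rintro x ⟨⟨⟨hx0, _⟩, hx2⟩, hx3⟩
      have hx2' : x ≤ P0 := hx2
      rw [Gfun_eq]
      congr 1
      exact floor_one_div_eq hx0 (by nlinarith) (by
        rw [Set.mem_Ioi, div_lt_iff₀ (by positivity)] at hx3; linarith)
  -- right piece
  have hR : ContinuousWithinAt (Gfun φ) (Ioc 0 1 ∩ Ici P0) P0 := by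
    rcases lt_or_eq_of_le hP0le with hlt | heq
    · -- P0 < 1/n : floor locally constant
      have hU : Iio (1 / (n : ℝ)) ∩ Ioi (1 / ((n : ℝ) + 1)) ∈ nhds P0 :=
        Filter.inter_mem (isOpen_Iio.mem_nhds hlt) (isOpen_Ioi.mem_nhds hP0gt)
      rw [← continuousWithinAt_inter hU]
      apply ContinuousWithinAt.congr
        (((gaux_contOn hc hn1) P0 ⟨hP0pos.le, hP0le⟩).mono ?_) ?_ (Gfun_eq φ P0)
      · rintro x ⟨⟨⟨hx0, _⟩, _⟩, hx3, _⟩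
        exact ⟨hx0.le, le_of_lt hx3⟩
      · rintro x ⟨⟨⟨hx0, _⟩, _⟩, hx3, hx4⟩
        rw [Gfun_eq]
        congr 1
        refine floor_one_div_eq hx0 ?_ ?_
        · rw [Set.mem_Iio, lt_div_iff₀ hn0] at hx3; linarith
        · rw [Set.mem_Ioi, div_lt_iff₀ (by positivity)] at hx4; linarith
    · -- P0 = 1/n : breakpoint
      rcases eq_or_lt_of_le hn1 with h1 | h2
      · -- n = 1, P0 = 1
        have hn1' : (n : ℝ) = 1 := by exact_mod_cast h1.symm
        have hP01 : P0 = 1 := by rw [heq, hn1']; norm_num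
        have hsub : Ioc (0:ℝ) 1 ∩ Ici P0 ⊆ {P0} := by
          rintro x ⟨⟨_, hx1⟩, hx2⟩
          have hxP : x = P0 := le_antisymm (by rw [hP01]; exact hx1) hx2
          exact Set.mem_singleton_iff.2 hxP
        exact (continuousWithinAt_singleton (f := Gfun φ) (x := P0)).mono hsub
      · -- n ≥ 2
        set m := n - 1 with hm_def
        have hmn : n = m + 1 := by omega
        have hm1 : 1 ≤ m := by omega
        have hm0 : (0 : ℝ) < (m : ℝ) := by exact_mod_cast hm1
        have hmr : (m : ℝ) = (n : ℝ) - 1 := by rw [hmn]; push_cast; ring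
        have hPm : P0 < 1 / (m : ℝ) := by
          rw [heq, div_lt_div_iff₀ hn0 hm0, hmr]; linarith
        have hU : Iio (1 / (m : ℝ)) ∈ nhds P0 := isOpen_Iio.mem_nhds hPm
        rw [← continuousWithinAt_inter hU]
        have hGP0 : Gfun φ P0 = gaux φ m P0 := by
          rw [Gfun_eq]
          show gaux φ n P0 = gaux φ m P0
          rw [heq, hmn]
          push_cast
          have e1 : ((m : ℝ) + 1) * (1 / ((m : ℝ) + 1)) = 1 := by
            rw [mul_one_div_cancel (by positivity)]
          have e2 : 1 - (m : ℝ) * (1 / ((m : ℝ) + 1)) = 1 / ((m : ℝ) + 1) := by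
            field_simp; ring
          rw [gaux, gaux]
          push_cast
          rw [e1, e2]
          simp [hφ0]
          ring
        apply ContinuousWithinAt.congr
          (((gaux_contOn hc hm1) P0 ⟨hP0pos.le, hPm.le⟩).mono ?_) ?_ hGP0
        · rintro x ⟨⟨⟨hx0, _⟩, _⟩, hx3⟩
          exact ⟨hx0.le, le_of_lt hx3⟩
        · rintro x ⟨⟨⟨hx0, _⟩, hx2⟩, hx3⟩
          rcases eq_or_lt_of_le (show P0 ≤ x from hx2) with rfl | hgt
          · exact hGP0
          · rw [Gfun_eq]
            congr 1
            refine floor_one_div_eq hx0 ?_ ?_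
            · rw [Set.mem_Iio, lt_div_iff₀ hm0] at hx3; linarith
            · have hPeq : P0 = 1 / ((m : ℝ) + 1) := by
                rw [heq, hmn]; push_cast; ring
              rw [hPeq, div_lt_iff₀ (by positivity : (0:ℝ) < (m:ℝ)+1)] at hgt
              linarith
  have : ContinuousWithinAt (Gfun φ) ((Ioc 0 1 ∩ Iic P0) ∪ (Ioc 0 1 ∩ Ici P0)) P0 := hL.union hR
  exact this.mono (fun x hx => by
    rcases le_total x P0 with h | h
    · exact Or.inl ⟨hx, h⟩
    · exact Or.inr ⟨hx, h⟩)

end LPaux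

open Real Set in
lemma EntropicPair.hmin_eq (e : EntropicPair) (P : ℝ) :
    e.Hmin P = e.h (LPaux.Gfun e.phi P) := rfl

open Real Set in
lemma EntropicPair.hmin_anti (e : EntropicPair) : AntitoneOn e.Hmin (Ioc (0:ℝ) 1) := by
  intro x hx y hy hxy
  rw [e.hmin_eq, e.hmin_eq]
  rcases e.admissible with ⟨hconc, hmono⟩ | ⟨hconv, hanti⟩
  · exact hmono.monotone (LPaux.Gfun_anti hconc.concaveOn e.phi_zero hx hy hxy)
  · have h2 : LPaux.Gfun (fun t => -e.phi t) = fun P => -LPaux.Gfun e.phi P := by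
      funext P; simp [LPaux.Gfun]; ring
    have h1 := LPaux.Gfun_anti (φ := fun t => -e.phi t) hconv.convexOn.neg
      (by simp [e.phi_zero]) hx hy hxy
    rw [h2] at h1
    simp only at h1
    exact hanti.antitone (by linarith)

open Real Set in
lemma EntropicPair.hmin_contOn (e : EntropicPair) : ContinuousOn e.Hmin (Ioc (0:ℝ) 1) := by
  have : e.Hmin = fun P => e.h (LPaux.Gfun e.phi P) := rfl
  rw [this]
  exact e.h_cont.comp_continuousOn (LPaux.Gfun_contOn e.phi_cont e.phi_zero)

/-- Minimization of the sum of minimal `(h,φ)`-entropies over the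
Landau–Pollak domain: the infimum is attained and equals `D_A(γ_A) + D_B(γ_B)` when
`γ_{A,B} ≤ γ_A + γ_B`, and `min_{θ ∈ [γ_A, γ_{A,B}−γ_B]} (D_A(θ) + D_B(γ_{A,B}−θ))`
otherwise. -/
theorem min_hmin_sum_landau_pollak (eA eB : EntropicPair)
    (cA cB cAB : ℝ) (hcA : cA ∈ Set.Ioc (0:ℝ) 1) (hcB : cB ∈ Set.Ioc (0:ℝ) 1)
    (hcAB : cAB ∈ Set.Ioc (0:ℝ) 1) (hle : cAB ≤ cA * cB)
    (γA γB γAB : ℝ) (hγA : γA = Real.arccos cA) (hγB : γB = Real.arccos cB)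
    (hγAB : γAB = Real.arccos cAB) :
    IsLeast
      { x : ℝ | ∃ PA PB : ℝ, PA ∈ Set.Ioc 0 (cA ^ 2) ∧ PB ∈ Set.Ioc 0 (cB ^ 2) ∧
          Real.arccos (Real.sqrt PA) + Real.arccos (Real.sqrt PB) ≥ γAB ∧
          x = eA.Hmin PA + eB.Hmin PB }
      (if γAB ≤ γA + γB then eA.D γA + eB.D γB
       else sInf ((fun θ => eA.D θ + eB.D (γAB - θ)) '' Set.Icc γA (γAB - γB))) := by
  obtain ⟨hcA0, hcA1⟩ := hcA
  obtain ⟨hcB0, hcB1⟩ := hcB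
  obtain ⟨hcAB0, hcAB1⟩ := hcAB
  have hπ := Real.pi_pos
  have hγA0 : 0 ≤ γA := hγA ▸ Real.arccos_nonneg cA
  have hγB0 : 0 ≤ γB := hγB ▸ Real.arccos_nonneg cB
  have hγAB0 : 0 ≤ γAB := hγAB ▸ Real.arccos_nonneg cAB
  have hγAlt : γA < π / 2 := hγA ▸ Real.arccos_lt_pi_div_two.2 hcA0
  have hγBlt : γB < π / 2 := hγB ▸ Real.arccos_lt_pi_div_two.2 hcB0
  have hγABlt : γAB < π / 2 := hγAB ▸ Real.arccos_lt_pi_div_two.2 hcAB0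
  have hcosA : Real.cos γA = cA := by rw [hγA]; exact Real.cos_arccos (by linarith) hcA1
  have hcosB : Real.cos γB = cB := by rw [hγB]; exact Real.cos_arccos (by linarith) hcB1
  have hA1 : cA ^ 2 ≤ 1 := by nlinarith
  have hB1 : cB ^ 2 ≤ 1 := by nlinarith
  have cos_sq_mem : ∀ θ : ℝ, 0 ≤ θ → θ < π / 2 → Real.cos θ ^ 2 ∈ Set.Ioc (0:ℝ) 1 := by
    intro θ h0 h1
    have hc : 0 < Real.cos θ := Real.cos_pos_of_mem_Ioo ⟨by linarith, h1⟩
    exact ⟨by positivity, by nlinarith [Real.cos_le_one θ]⟩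
  have cos_sq_anti : ∀ a b : ℝ, 0 ≤ a → a ≤ b → b < π / 2 →
      Real.cos b ^ 2 ≤ Real.cos a ^ 2 := by
    intro a b h0 hab hb
    have h1 : Real.cos b ≤ Real.cos a :=
      Real.cos_le_cos_of_nonneg_of_le_pi h0 (by linarith) hab
    have h2 : 0 ≤ Real.cos b := (Real.cos_pos_of_mem_Ioo ⟨by linarith, hb⟩).le
    nlinarith
  have arccos_sqrt_facts : ∀ c P : ℝ, 0 < c → c ≤ 1 → P ∈ Set.Ioc 0 (c ^ 2) →
      Real.cos (Real.arccos (Real.sqrt P)) ^ 2 = P ∧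
      Real.arccos c ≤ Real.arccos (Real.sqrt P) ∧
      Real.arccos (Real.sqrt P) < π / 2 := by
    intro c P hc0 hc1 hP
    have hs0 : 0 < Real.sqrt P := Real.sqrt_pos.2 hP.1
    have hsc : Real.sqrt P ≤ c := by
      have := Real.sqrt_le_sqrt hP.2
      rwa [Real.sqrt_sq hc0.le] at this
    have hs1 : Real.sqrt P ≤ 1 := hsc.trans hc1
    have hcos : Real.cos (Real.arccos (Real.sqrt P)) = Real.sqrt P :=
      Real.cos_arccos (by linarith) hs1
    refine ⟨by rw [hcos]; exact Real.sq_sqrt hP.1.le, ?_, Real.arccos_lt_pi_div_two.2 hs0⟩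
    rw [Real.arccos_eq_pi_div_two_sub_arcsin, Real.arccos_eq_pi_div_two_sub_arcsin]
    have := Real.monotone_arcsin hsc
    linarith
  by_cases hcase : γAB ≤ γA + γB
  · rw [if_pos hcase]
    constructor
    · refine ⟨cA ^ 2, cB ^ 2, ⟨by positivity, le_rfl⟩, ⟨by positivity, le_rfl⟩, ?_, ?_⟩
      · rw [Real.sqrt_sq hcA0.le, Real.sqrt_sq hcB0.le, ← hγA, ← hγB]
        exact hcase
      · show eA.D γA + eB.D γB = _
        rw [EntropicPair.D, EntropicPair.D, hcosA, hcosB]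
    · rintro x ⟨PA, PB, hPA, hPB, _, rfl⟩
      have hPAm : PA ∈ Set.Ioc (0:ℝ) 1 := ⟨hPA.1, hPA.2.trans hA1⟩
      have hPBm : PB ∈ Set.Ioc (0:ℝ) 1 := ⟨hPB.1, hPB.2.trans hB1⟩
      have h1 : eA.Hmin (cA ^ 2) ≤ eA.Hmin PA :=
        eA.hmin_anti hPAm ⟨by positivity, hA1⟩ hPA.2
      have h2 : eB.Hmin (cB ^ 2) ≤ eB.Hmin PB :=
        eB.hmin_anti hPBm ⟨by positivity, hB1⟩ hPB.2
      have hDA : eA.D γA = eA.Hmin (cA ^ 2) := by rw [EntropicPair.D, hcosA]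
      have hDB : eB.D γB = eB.Hmin (cB ^ 2) := by rw [EntropicPair.D, hcosB]
      rw [hDA, hDB]; linarith
  · rw [if_neg hcase]
    push_neg at hcase
    have hIne : γA ≤ γAB - γB := by linarith
    set f := fun θ => eA.D θ + eB.D (γAB - θ) with hf_def
    set I := Set.Icc γA (γAB - γB) with hI_def
    have hmemI : ∀ θ ∈ I, 0 ≤ θ ∧ θ < π / 2 ∧ 0 ≤ γAB - θ ∧ γAB - θ < π / 2 := by
      rintro θ ⟨h1, h2⟩
      exact ⟨by linarith, by linarith, by linarith, by linarith⟩
    have hf_cont : ContinuousOn f I := by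
      apply ContinuousOn.add
      · show ContinuousOn (fun θ => eA.Hmin (Real.cos θ ^ 2)) I
        apply eA.hmin_contOn.comp ((Real.continuous_cos.pow 2).continuousOn)
        intro θ hθ
        obtain ⟨u1, u2, _, _⟩ := hmemI θ hθ
        exact cos_sq_mem θ u1 u2
      · show ContinuousOn (fun θ => eB.Hmin (Real.cos (γAB - θ) ^ 2)) I
        apply eB.hmin_contOn.comp
          (((Real.continuous_cos.comp (continuous_const.sub continuous_id)).pow 2).continuousOn)
        intro θ hθ
        obtain ⟨_, _, u3, u4⟩ := hmemI θ hθ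
        exact cos_sq_mem _ u3 u4
    obtain ⟨θ0, hθ0I, hθ0min⟩ :=
      isCompact_Icc.exists_isMinOn (Set.nonempty_Icc.2 hIne) hf_cont
    have hθ0min' : ∀ θ ∈ I, f θ0 ≤ f θ := fun θ hθ => hθ0min hθ
    have hleast : IsLeast (f '' I) (f θ0) :=
      ⟨Set.mem_image_of_mem f hθ0I, by rintro _ ⟨θ, hθ, rfl⟩; exact hθ0min' θ hθ⟩
    rw [hleast.csInf_eq]
    obtain ⟨h00, h0lt, h00', h0lt'⟩ := hmemI θ0 hθ0I
    have hcos0 : 0 < Real.cos θ0 := Real.cos_pos_of_mem_Ioo ⟨by linarith, h0lt⟩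
    have hcos0' : 0 < Real.cos (γAB - θ0) := Real.cos_pos_of_mem_Ioo ⟨by linarith, h0lt'⟩
    constructor
    · refine ⟨Real.cos θ0 ^ 2, Real.cos (γAB - θ0) ^ 2,
        ⟨by positivity, ?_⟩, ⟨by positivity, ?_⟩, ?_, rfl⟩
      · rw [← hcosA]; exact cos_sq_anti γA θ0 hγA0 hθ0I.1 h0lt
      · rw [← hcosB]
        exact cos_sq_anti γB (γAB - θ0) hγB0 (by linarith [hθ0I.2]) h0lt'
      · rw [Real.sqrt_sq hcos0.le, Real.sqrt_sq hcos0'.le,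
          Real.arccos_cos h00 (by linarith), Real.arccos_cos h00' (by linarith)]
        simp
    · rintro x ⟨PA, PB, hPA, hPB, hg, rfl⟩
      obtain ⟨hAc, hAge, hAlt⟩ := arccos_sqrt_facts cA PA hcA0 hcA1 hPA
      obtain ⟨hBc, hBge, hBlt⟩ := arccos_sqrt_facts cB PB hcB0 hcB1 hPB
      set θA := Real.arccos (Real.sqrt PA) with hθA_def
      set θB := Real.arccos (Real.sqrt PB) with hθB_def
      have hθA0 : 0 ≤ θA := Real.arccos_nonneg _
      have hθB0 : 0 ≤ θB := Real.arccos_nonneg _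
      rw [← hγA] at hAge
      rw [← hγB] at hBge
      set θ := min θA (γAB - γB) with hθ_def
      have hθ0 : 0 ≤ θ := le_min hθA0 (by linarith)
      have hθI : θ ∈ I := ⟨le_min hAge hIne, min_le_right _ _⟩
      have hθlt : θ < π / 2 := lt_of_le_of_lt (min_le_right _ _) (by linarith)
      have hθθA : θ ≤ θA := min_le_left _ _
      have hsub : γAB - θ ≤ θB := by
        have h1 : γAB - θB ≤ θA := by linarith [hg]
        have h2 : γAB - θB ≤ γAB - γB := by linarith
        have : γAB - θB ≤ θ := le_min h1 h2
        linarith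
      have hsub0 : 0 ≤ γAB - θ := by
        have := min_le_right θA (γAB - γB); linarith
      have hPAm : PA ∈ Set.Ioc (0:ℝ) 1 := ⟨hPA.1, hPA.2.trans hA1⟩
      have hPBm : PB ∈ Set.Ioc (0:ℝ) 1 := ⟨hPB.1, hPB.2.trans hB1⟩
      have hq1 : PA ≤ Real.cos θ ^ 2 := by
        rw [← hAc]; exact cos_sq_anti θ θA hθ0 hθθA hAlt
      have hq2 : PB ≤ Real.cos (γAB - θ) ^ 2 := by
        rw [← hBc]; exact cos_sq_anti (γAB - θ) θB hsub0 hsub hBlt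
      have ht1 : eA.Hmin (Real.cos θ ^ 2) ≤ eA.Hmin PA :=
        eA.hmin_anti hPAm (cos_sq_mem θ hθ0 hθlt) hq1
      have ht2 : eB.Hmin (Real.cos (γAB - θ) ^ 2) ≤ eB.Hmin PB :=
        eB.hmin_anti hPBm (cos_sq_mem _ hsub0 (by linarith)) hq2
      have hfθ : f θ = eA.Hmin (Real.cos θ ^ 2) + eB.Hmin (Real.cos (γAB - θ) ^ 2) := rfl
      have := hθ0min' θ hθI
      rw [hfθ] at this
      linarith
end
end

section
/- Let f : (0,∞) → ℝ be increasing with f(1) = 0, and define F_α(p) = f( Σ_k p_k^α ) / (1−α) for a probability vector p and α ≥ 0, α ≠ 1 (with the convention 0^0 := 0). (i) If α > 1 and f(x) + f(y) ≤ f(xy) for all x, y ∈ (0,1], then for all probability vectors p of length N and q of length M one has F_α(p) + F_α(q) ≥ F_α(p ⊗ q). (ii) If 0 ≤ α < 1 and f(x) + f(y) ≥ f(xy) for all x, y ≥ 1, then likewise F_α(p) + F_α(q) ≥ F_α(p ⊗ q). -/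
open scoped BigOperators

noncomputable section

/-- Real power with the convention `0 ^ λ := 0` (in particular `0 ^ 0 := 0`). -/
noncomputable def pow0 (x l : ℝ) : ℝ := if x = 0 then 0 else Real.rpow x l

/-- The generalized entropy `F_α(p) = f(Σ_k p_k^α)/(1−α)`. -/
noncomputable def Fent (f : ℝ → ℝ) (α : ℝ) {ι : Type*} [Fintype ι] (p : ι → ℝ) : ℝ :=
  f (∑ k, pow0 (p k) α) / (1 - α)

lemma pow0_nonneg {x : ℝ} (hx : 0 ≤ x) (l : ℝ) : 0 ≤ pow0 x l := by
  unfold pow0; split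
  · exact le_rfl
  · exact Real.rpow_nonneg hx l

lemma pow0_mul {x y : ℝ} (hx : 0 ≤ x) (hy : 0 ≤ y) (l : ℝ) :
    pow0 (x * y) l = pow0 x l * pow0 y l := by
  unfold pow0
  rcases eq_or_lt_of_le hx with h | h
  · simp [← h]
  rcases eq_or_lt_of_le hy with h' | h'
  · simp [← h']
  rw [if_neg (by positivity), if_neg h.ne', if_neg h'.ne']
  exact Real.mul_rpow hx hy

/-- Factorization of the power sum over a product. -/
lemma pow0_sum_prod {N M : ℕ} (p : Fin N → ℝ) (q : Fin M → ℝ)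
    (hp : ∀ k, 0 ≤ p k) (hq : ∀ l, 0 ≤ q l) (α : ℝ) :
    ∑ kl : Fin N × Fin M, pow0 (p kl.1 * q kl.2) α
      = (∑ k, pow0 (p k) α) * (∑ l, pow0 (q l) α) := by
  rw [Finset.sum_mul_sum, Fintype.sum_prod_type]
  exact Finset.sum_congr rfl fun k _ => Finset.sum_congr rfl fun l _ =>
    pow0_mul (hp k) (hq l) α

lemma powsum_pos {N : ℕ} {p : Fin N → ℝ} (hp : IsProbVec p) (α : ℝ) :
    0 < ∑ k, pow0 (p k) α := by
  obtain ⟨hp0, hp1⟩ := hp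
  have : ∃ k, 0 < p k := by
    by_contra h
    push_neg at h
    have : ∑ k, p k = 0 := Finset.sum_eq_zero fun k _ => le_antisymm (h k) (hp0 k)
    rw [hp1] at this; norm_num at this
  obtain ⟨k, hk⟩ := this
  refine Finset.sum_pos' (fun j _ => pow0_nonneg (hp0 j) α) ⟨k, Finset.mem_univ k, ?_⟩
  unfold pow0
  rw [if_neg hk.ne']
  exact Real.rpow_pos_of_pos hk α

lemma prob_le_one {N : ℕ} {p : Fin N → ℝ} (hp : IsProbVec p) (k : Fin N) : p k ≤ 1 := by
  obtain ⟨hp0, hp1⟩ := hp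
  calc p k ≤ ∑ j, p j := Finset.single_le_sum (fun j _ => hp0 j) (Finset.mem_univ k)
    _ = 1 := hp1

lemma powsum_le_one {N : ℕ} {p : Fin N → ℝ} (hp : IsProbVec p) {α : ℝ} (hα : 1 ≤ α) :
    ∑ k, pow0 (p k) α ≤ 1 := by
  have h : ∀ k, pow0 (p k) α ≤ p k := by
    intro k
    unfold pow0
    split
    · next h => rw [h]
    · next h =>
      have hk : 0 < p k := lt_of_le_of_ne (hp.1 k) (Ne.symm h)
      calc Real.rpow (p k) α ≤ Real.rpow (p k) 1 :=
            Real.rpow_le_rpow_of_exponent_ge hk (prob_le_one hp k) hα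
        _ = p k := Real.rpow_one _
  calc ∑ k, pow0 (p k) α ≤ ∑ k, p k := Finset.sum_le_sum fun k _ => h k
    _ = 1 := hp.2

lemma one_le_powsum {N : ℕ} {p : Fin N → ℝ} (hp : IsProbVec p) {α : ℝ} (hα : α ≤ 1) :
    1 ≤ ∑ k, pow0 (p k) α := by
  have h : ∀ k, p k ≤ pow0 (p k) α := by
    intro k
    unfold pow0
    split
    · next h => rw [h]
    · next h =>
      have hk : 0 < p k := lt_of_le_of_ne (hp.1 k) (Ne.symm h)
      calc p k = Real.rpow (p k) 1 := (Real.rpow_one _).symm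
        _ ≤ Real.rpow (p k) α :=
            Real.rpow_le_rpow_of_exponent_ge hk (prob_le_one hp k) hα
  calc (1:ℝ) = ∑ k, p k := hp.2.symm
    _ ≤ ∑ k, pow0 (p k) α := Finset.sum_le_sum fun k _ => h k

/-- Sub/super-additivity of `F_α` with respect to the Kronecker product:
(i) if `α > 1` and `f(x) + f(y) ≤ f(xy)` on `(0,1]²`, then `F_α(p) + F_α(q) ≥ F_α(p ⊗ q)`;
(ii) if `0 ≤ α < 1` and `f(x) + f(y) ≥ f(xy)` on `[1,∞)²`, then likewise. -/
theorem Fent_superadditive_kronecker (f : ℝ → ℝ)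
    (hf : StrictMonoOn f (Set.Ioi 0)) (hf1 : f 1 = 0) :
    (∀ α : ℝ, 1 < α →
      (∀ x y : ℝ, x ∈ Set.Ioc (0:ℝ) 1 → y ∈ Set.Ioc (0:ℝ) 1 → f x + f y ≤ f (x * y)) →
      ∀ {N M : ℕ} (p : Fin N → ℝ) (q : Fin M → ℝ), IsProbVec p → IsProbVec q →
        Fent f α p + Fent f α q ≥ Fent f α (fun kl : Fin N × Fin M => p kl.1 * q kl.2)) ∧
    (∀ α : ℝ, 0 ≤ α → α < 1 →
      (∀ x y : ℝ, 1 ≤ x → 1 ≤ y → f x + f y ≥ f (x * y)) →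
      ∀ {N M : ℕ} (p : Fin N → ℝ) (q : Fin M → ℝ), IsProbVec p → IsProbVec q →
        Fent f α p + Fent f α q ≥ Fent f α (fun kl : Fin N × Fin M => p kl.1 * q kl.2)) := by
  constructor
  · intro α hα hsub N M p q hp hq
    unfold Fent
    rw [pow0_sum_prod p q hp.1 hq.1 α]
    rw [← add_div, ge_iff_le, div_le_div_right_of_neg (by linarith)]
    exact hsub _ _ ⟨powsum_pos hp α, powsum_le_one hp hα.le⟩
      ⟨powsum_pos hq α, powsum_le_one hq hα.le⟩
  · intro α hα0 hα1 hsup N M p q hp hq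
    unfold Fent
    rw [pow0_sum_prod p q hp.1 hq.1 α]
    rw [← add_div, ge_iff_le, div_le_div_iff_of_pos_right (by linarith)]
    exact hsup _ _ (one_le_powsum hp hα1.le) (one_le_powsum hq hα1.le)
end
end
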